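/- The map φ(z) = e^z / (e^z + 1) from ℂ \ {(2n+1)πi : n ∈ ℤ} to ℂ \ {0, 1} is a covering map. -/

import Mathlib

open Metric Set Complex

noncomputable section ExpOverAux

namespace ExpOverAux

/-- The map in question. -/
def phi (z : ℂ) : ℂ := Complex.exp z / (Complex.exp z + 1)

/-- The inverse Möbius transformation. -/
def psi (w : ℂ) : ℂ := w / (1 - w)

lemma one_sub_ne {w : ℂ} (h1 : w ≠ 1) : (1 : ℂ) - w ≠ 0 := sub_ne_zero.mpr (Ne.symm h1)

lemma psi_ne_zero {w : ℂ} (h0 : w ≠ 0) (h1 : w ≠ 1) : psi w ≠ 0 :=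
  div_ne_zero h0 (one_sub_ne h1)

lemma phi_eq_of_exp_eq {w z : ℂ} (h1 : w ≠ 1) (hz : Complex.exp z = psi w) :
    phi z = w := by
  have hw : (1 : ℂ) - w ≠ 0 := one_sub_ne h1
  have hd : psi w + 1 = 1 / (1 - w) := by unfold psi; field_simp; ring
  unfold phi
  rw [hz, hd]
  unfold psi
  field_simp

lemma psi_phi {z : ℂ} (h : Complex.exp z + 1 ≠ 0) : psi (phi z) = Complex.exp z := by
  unfold phi psi
  have h2 : 1 - Complex.exp z / (Complex.exp z + 1) = 1 / (Complex.exp z + 1) := by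
    field_simp
    ring
  rw [h2]
  field_simp

lemma exp_add_one_ne {z : ℂ} (h : phi z ≠ 0) : Complex.exp z + 1 ≠ 0 := by
  intro hc
  exact h (by unfold phi; rw [hc, div_zero])

/-- The base set of the trivialization at `w₀`. -/
def V (w₀ : ℂ) : Set ℂ := {w | w ≠ 1 ∧ psi w / psi w₀ ∈ Complex.slitPlane}

/-- A local branch of the inverse of `phi`. -/
def L (w₀ w : ℂ) : ℂ := Complex.log (psi w / psi w₀) + Complex.log (psi w₀)

lemma mem_V_psi_ne {w₀ w : ℂ} (hw : w ∈ V w₀) : psi w ≠ 0 := by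
  intro h
  exact Complex.slitPlane_ne_zero hw.2 (by rw [h, zero_div])

lemma mem_V_ne_zero {w₀ w : ℂ} (hw : w ∈ V w₀) : w ≠ 0 := by
  intro h
  exact mem_V_psi_ne hw (by rw [h]; simp [psi])

lemma mem_V_self {w₀ : ℂ} (h0 : w₀ ≠ 0) (h1 : w₀ ≠ 1) : w₀ ∈ V w₀ :=
  ⟨h1, by rw [div_self (psi_ne_zero h0 h1)]; exact Complex.one_mem_slitPlane⟩

lemma exp_L {w₀ : ℂ} (h0 : w₀ ≠ 0) (h1 : w₀ ≠ 1) {w : ℂ} (hw : w ∈ V w₀) :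
    Complex.exp (L w₀ w) = psi w := by
  unfold L
  rw [Complex.exp_add, Complex.exp_log (Complex.slitPlane_ne_zero hw.2),
    Complex.exp_log (psi_ne_zero h0 h1)]
  exact div_mul_cancel₀ _ (psi_ne_zero h0 h1)

lemma contOn_psi_div {w₀ : ℂ} : ContinuousOn (fun w => psi w / psi w₀) {w : ℂ | w ≠ 1} := by
  apply ContinuousOn.div_const
  exact ContinuousOn.div continuous_id.continuousOn
    (continuous_const.sub continuous_id).continuousOn
    (fun w hw => one_sub_ne hw)

lemma isOpen_V (w₀ : ℂ) : IsOpen (V w₀) := by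
  have hV : V w₀ = {w : ℂ | w ≠ 1} ∩ (fun w => psi w / psi w₀) ⁻¹' Complex.slitPlane := rfl
  rw [hV]
  exact ContinuousOn.isOpen_inter_preimage contOn_psi_div isOpen_ne Complex.isOpen_slitPlane

lemma contOn_L (w₀ : ℂ) : ContinuousOn (L w₀) (V w₀) := by
  apply ContinuousOn.add ?_ continuousOn_const
  apply ContinuousOn.clog
  · exact contOn_psi_div.mono (fun w hw => hw.1)
  · exact fun w hw => hw.2

lemma contAt_phi {z : ℂ} (h : Complex.exp z + 1 ≠ 0) : ContinuousAt phi z :=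
  Complex.continuous_exp.continuousAt.div
    (Complex.continuous_exp.continuousAt.add continuousAt_const) h

lemma exists_int {w₀ : ℂ} (h0 : w₀ ≠ 0) (h1 : w₀ ≠ 1) {z : ℂ} (hz : phi z ∈ V w₀) :
    ∃ k : ℤ, z = L w₀ (phi z) + k * (2 * Real.pi * Complex.I) := by
  have hne : Complex.exp z + 1 ≠ 0 := exp_add_one_ne (mem_V_ne_zero hz)
  have hexp : Complex.exp (L w₀ (phi z)) = Complex.exp z := by
    rw [exp_L h0 h1 hz, psi_phi hne]
  exact Complex.exp_eq_exp_iff_exists_int.mp hexp.symm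

/-- The fiber coordinate. -/
def nfun (w₀ z : ℂ) : ℤ := round ((z.im - (L w₀ (phi z)).im) / (2 * Real.pi))

lemma im_div_eq (a : ℂ) (k : ℤ) :
    ((a + k * (2 * Real.pi * Complex.I)).im - a.im) / (2 * Real.pi) = k := by
  have hπ : Real.pi ≠ 0 := Real.pi_ne_zero
  simp [Complex.add_im, Complex.mul_im, Complex.mul_re]

lemma round_eq_int (a : ℂ) (k : ℤ) :
    round (((a + k * (2 * Real.pi * Complex.I)).im - a.im) / (2 * Real.pi)) = k := by
  rw [im_div_eq]; exact round_intCast k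

lemma phi_L_add {w₀ : ℂ} (h0 : w₀ ≠ 0) (h1 : w₀ ≠ 1) {w : ℂ} (hw : w ∈ V w₀) (k : ℤ) :
    phi (L w₀ w + k * (2 * Real.pi * Complex.I)) = w := by
  apply phi_eq_of_exp_eq hw.1
  rw [Complex.exp_add, exp_L h0 h1 hw, Complex.exp_int_mul_two_pi_mul_I, mul_one]

lemma isOpen_source (w₀ : ℂ) : IsOpen (phi ⁻¹' V w₀) := by
  have hs : phi ⁻¹' V w₀ = {z : ℂ | Complex.exp z + 1 ≠ 0} ∩ phi ⁻¹' V w₀ := by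
    ext z
    exact ⟨fun hz => ⟨exp_add_one_ne (mem_V_ne_zero hz), hz⟩, fun h => h.2⟩
  rw [hs]
  apply ContinuousOn.isOpen_inter_preimage
  · exact fun z hz => (contAt_phi hz).continuousWithinAt
  · exact isOpen_compl_singleton.preimage (Complex.continuous_exp.add continuous_const)
  · exact isOpen_V w₀

lemma nfun_eq {w₀ : ℂ} {z : ℂ} {k : ℤ}
    (hk : z = L w₀ (phi z) + k * (2 * Real.pi * Complex.I)) : nfun w₀ z = k := by
  unfold nfun
  set a := L w₀ (phi z) with ha
  rw [hk]
  exact round_eq_int a k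

lemma mval_eq {w₀ : ℂ} {z : ℂ} {k : ℤ}
    (hk : z = L w₀ (phi z) + k * (2 * Real.pi * Complex.I)) :
    (z.im - (L w₀ (phi z)).im) / (2 * Real.pi) = k := by
  set a := L w₀ (phi z) with ha
  rw [hk]
  exact im_div_eq a k

/-- The trivialization of `phi` at `w₀`. -/
def triv (w₀ : ℂ) (h0 : w₀ ≠ 0) (h1 : w₀ ≠ 1) : Bundle.Trivialization ℤ phi where
  toFun z := (phi z, nfun w₀ z)
  invFun p := L w₀ p.1 + (p.2 : ℂ) * (2 * Real.pi * Complex.I)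
  source := phi ⁻¹' V w₀
  target := V w₀ ×ˢ Set.univ
  map_source' z hz := ⟨hz, trivial⟩
  map_target' p hp := by
    show phi _ ∈ V w₀
    rw [phi_L_add h0 h1 hp.1 p.2]
    exact hp.1
  left_inv' z hz := by
    obtain ⟨k, hk⟩ := exists_int h0 h1 hz
    show L w₀ (phi z) + (nfun w₀ z : ℂ) * (2 * Real.pi * Complex.I) = z
    rw [nfun_eq hk]
    exact hk.symm
  right_inv' p hp := by
    have hp1 : phi (L w₀ p.1 + (p.2 : ℂ) * (2 * Real.pi * Complex.I)) = p.1 :=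
      phi_L_add h0 h1 hp.1 p.2
    have hp2 : nfun w₀ (L w₀ p.1 + (p.2 : ℂ) * (2 * Real.pi * Complex.I)) = p.2 := by
      apply nfun_eq
      rw [hp1]
    show (phi _, nfun w₀ _) = p
    rw [hp1, hp2]
  open_source := isOpen_source w₀
  open_target := (isOpen_V w₀).prod isOpen_univ
  continuousOn_toFun := by
    have hφ : ContinuousOn phi (phi ⁻¹' V w₀) := fun z hz =>
      (contAt_phi (exp_add_one_ne (mem_V_ne_zero hz))).continuousWithinAt
    apply ContinuousOn.prodMk hφ
    have hm : ContinuousOn (fun z => (z.im - (L w₀ (phi z)).im) / (2 * Real.pi))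
        (phi ⁻¹' V w₀) := by
      apply ContinuousOn.div_const
      apply ContinuousOn.sub Complex.continuous_im.continuousOn
      exact Complex.continuous_im.comp_continuousOn
        ((contOn_L w₀).comp hφ (fun z hz => hz))
    intro z₀ hz₀
    obtain ⟨k, hk⟩ := exists_int h0 h1 hz₀
    have hmz₀ : (z₀.im - (L w₀ (phi z₀)).im) / (2 * Real.pi) = k := mval_eq hk
    have hev : (fun z => nfun w₀ z) =ᶠ[nhdsWithin z₀ (phi ⁻¹' V w₀)] fun _ => k := by
      have hIoo : Set.Ioo ((k : ℝ) - 1 / 2) ((k : ℝ) + 1 / 2) ∈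
          nhds ((z₀.im - (L w₀ (phi z₀)).im) / (2 * Real.pi)) := by
        rw [hmz₀]
        exact Ioo_mem_nhds (by linarith) (by linarith)
      filter_upwards [hm z₀ hz₀ hIoo, self_mem_nhdsWithin] with z hz1 hz2
      obtain ⟨j, hj⟩ := exists_int h0 h1 hz2
      have hmj : (z.im - (L w₀ (phi z)).im) / (2 * Real.pi) = j := mval_eq hj
      simp only [Set.mem_preimage, Set.mem_Ioo, hmj] at hz1
      have hjk : j = k := by
        have hl : (k : ℝ) - 1 < j := by have := hz1.1; linarith
        have hr : (j : ℝ) < k + 1 := by have := hz1.2; linarith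
        have hl' : k - 1 < j := by exact_mod_cast hl
        have hr' : j < k + 1 := by exact_mod_cast hr
        omega
      rw [nfun_eq hj, hjk]
    have hcz : nfun w₀ z₀ = k := nfun_eq hk
    apply ContinuousWithinAt.congr_of_eventuallyEq continuousWithinAt_const hev hcz
  continuousOn_invFun := by
    apply ContinuousOn.add
    · exact (contOn_L w₀).comp continuousOn_fst (fun p hp => hp.1)
    · apply ContinuousOn.mul ?_ continuousOn_const
      exact Continuous.continuousOn (by continuity)
  baseSet := V w₀
  open_baseSet := isOpen_V w₀
  source_eq := rfl
  target_eq := rfl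
  proj_toFun z hz := rfl

lemma main1 : IsCoveringMapOn phi {w : ℂ | w ≠ 0 ∧ w ≠ 1} := by
  apply IsCoveringMapOn.mk phi _ (fun _ => ℤ)
    (fun w => triv w w.2.1 w.2.2)
    (fun w => mem_V_self w.2.1 w.2.2)

end ExpOverAux

end ExpOverAux

theorem exp_over_exp_add_one_coveringMap :
    IsCoveringMapOn (fun z : ℂ => Complex.exp z / (Complex.exp z + 1))
      {w : ℂ | w ≠ 0 ∧ w ≠ 1} ∧
    ∀ w : ℂ, w ≠ 0 → w ≠ 1 →
      ∃ z : ℂ, (∀ n : ℤ, z ≠ (2 * (n : ℂ) + 1) * Real.pi * Complex.I) ∧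
        Complex.exp z / (Complex.exp z + 1) = w := by
  constructor
  · exact ExpOverAux.main1
  · intro w h0 h1
    have hψ : ExpOverAux.psi w ≠ 0 := ExpOverAux.psi_ne_zero h0 h1
    refine ⟨Complex.log (ExpOverAux.psi w), ?_, ?_⟩
    · intro n hn
      have hexp : Complex.exp ((2 * (n : ℂ) + 1) * Real.pi * Complex.I) = -1 := by
        have : (2 * (n : ℂ) + 1) * Real.pi * Complex.I
            = (n : ℂ) * (2 * Real.pi * Complex.I) + Real.pi * Complex.I := by ring
        rw [this, Complex.exp_add, Complex.exp_int_mul_two_pi_mul_I, one_mul,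
          Complex.exp_pi_mul_I]
      have h2 : ExpOverAux.psi w = -1 := by
        rw [← Complex.exp_log hψ, hn, hexp]
      have h3 : w = -(1 - w) := by
        rw [ExpOverAux.psi] at h2
        have hw : (1 : ℂ) - w ≠ 0 := ExpOverAux.one_sub_ne h1
        field_simp at h2
        linear_combination h2
      have h4 : (0 : ℂ) = -1 := by linear_combination h3
      exact absurd h4 (by norm_num)
    · exact ExpOverAux.phi_eq_of_exp_eq h1 (Complex.exp_log hψ)
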